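/- For λ ∈ C with λ ≠ ±1, the curve C_2 in the weighted projective space P(1,1,1,2), defined by y_2^3 = y_0^3 + y_1^3 and y_3^3 = y_0^6 + y_1^6 − 2λ y_0^3 y_1^3, is smooth; moreover for λ = 1 or λ = −1 it is singular. -/
import Mathlib

/-- Jacobian of the equations `v³ = 1 + u³`, `t³ = 1 + u⁶ - 2λu³` of the
affine chart `{y₀ ≠ 0}` (and, by symmetry, `{y₁ ≠ 0}`) of the curve
`C₂ ⊂ ℙ(1,1,1,2)` given by `y₂³ = y₀³ + y₁³`, `y₃³ = y₀⁶ + y₁⁶ - 2λ y₀³y₁³`.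
Since no point of `C₂` has `y₀ = y₁ = 0`, these two charts cover `C₂`. -/
def jacC2 (lam u v t : ℂ) : Matrix (Fin 2) (Fin 3) ℂ :=
  !![-3 * u ^ 2, 3 * v ^ 2, 0;
     -6 * u ^ 5 + 6 * lam * u ^ 2, 0, 3 * t ^ 2]

/-- If a 2×2 column-submatrix has nonzero determinant, the 2×3 matrix has rank 2. -/
lemma rank_eq_two_of_minor {M : Matrix (Fin 2) (Fin 3) ℂ} (f : Fin 2 → Fin 3)
    (h : (M.submatrix id f).det ≠ 0) : M.rank = 2 := by
  refine le_antisymm (M.rank_le_card_height.trans (by simp)) ?_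
  have h2 : (M.submatrix id f).rank = 2 := by
    rw [Matrix.rank_of_isUnit _ ((Matrix.isUnit_iff_isUnit_det _).mpr
      (isUnit_iff_ne_zero.mpr h))]
    simp
  have hfac : M.submatrix id f
      = M * (1 : Matrix (Fin 3) (Fin 3) ℂ).submatrix (Equiv.refl _) f := by
    rw [Matrix.mul_submatrix_one]
    rfl
  calc (2 : ℕ) = (M.submatrix id f).rank := h2.symm
    _ = (M * (1 : Matrix (Fin 3) (Fin 3) ℂ).submatrix (Equiv.refl _) f).rank := by rw [hfac]
    _ ≤ M.rank := Matrix.rank_mul_le_left _ _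

/-- If the second row of a 2×3 matrix is zero, its rank is less than 2. -/
lemma rank_lt_two_of_row_zero {M : Matrix (Fin 2) (Fin 3) ℂ} (h : ∀ j, M 1 j = 0) :
    M.rank < 2 := by
  have hfac : M = (!![1; 0] : Matrix (Fin 2) (Fin 1) ℂ)
      * (Matrix.of fun (_ : Fin 1) j => M 0 j) := by
    ext i j
    fin_cases i <;>
      simp [Matrix.mul_apply, Fin.sum_univ_succ, h j]
  have : M.rank ≤ 1 := by
    rw [hfac]
    exact (Matrix.rank_mul_le_left _ _).trans (Matrix.rank_le_width _)
  omega

/-- For `λ ≠ ±1` the curve `C₂ : y₂³ = y₀³ + y₁³, y₃³ = y₀⁶ + y₁⁶ - 2λ y₀³y₁³`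
in `ℙ(1,1,1,2)` is smooth (the Jacobian has rank 2 at every point of every
affine chart), while for `λ = ±1` it is singular. -/
theorem C2_smooth_iff (lam : ℂ) :
    ((lam ≠ 1 ∧ lam ≠ -1) →
      ∀ u v t : ℂ, v ^ 3 = 1 + u ^ 3 → t ^ 3 = 1 + u ^ 6 - 2 * lam * u ^ 3 →
        (jacC2 lam u v t).rank = 2) ∧
    ((lam = 1 ∨ lam = -1) →
      ∃ u v t : ℂ, v ^ 3 = 1 + u ^ 3 ∧ t ^ 3 = 1 + u ^ 6 - 2 * lam * u ^ 3 ∧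
        (jacC2 lam u v t).rank < 2) := by
  constructor
  · rintro ⟨h1, hm1⟩ u v t hv ht
    by_cases htz : t = 0
    · -- t = 0 : use columns 0, 1
      subst htz
      have hu : u ≠ 0 := by
        rintro rfl
        simp at ht
      have hvz : v ≠ 0 := by
        rintro rfl
        have hu3 : u ^ 3 = -1 := by linear_combination -hv
        apply hm1
        rw [show u ^ 6 = (u ^ 3) ^ 2 from by ring, hu3] at ht
        linear_combination -ht / 2
      have hne : lam - u ^ 3 ≠ 0 := by
        intro hz
        have hl : u ^ 3 = lam := by linear_combination -hz
        rw [show u ^ 6 = (u ^ 3) ^ 2 from by ring, hl] at ht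
        have hsq : lam ^ 2 = 1 := by linear_combination ht
        have : (lam - 1) * (lam + 1) = 0 := by linear_combination hsq
        rcases mul_eq_zero.mp this with h | h
        · exact h1 (by linear_combination h)
        · exact hm1 (by linear_combination h)
      apply rank_eq_two_of_minor (f := ![0, 1])
      have hdet : ((jacC2 lam u v 0).submatrix id ![0, 1]).det
          = -18 * v ^ 2 * u ^ 2 * (lam - u ^ 3) := by
        simp [jacC2, Matrix.det_fin_two]
        ring
      rw [hdet]
      exact mul_ne_zero (mul_ne_zero (mul_ne_zero (by norm_num)
        (pow_ne_zero 2 hvz)) (pow_ne_zero 2 hu)) hne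
    · by_cases hvz : v = 0
      · -- v = 0, t ≠ 0 : use columns 0, 2; u ≠ 0 since u³ = -1
        have hu : u ≠ 0 := by
          rintro rfl
          rw [hvz] at hv
          simp at hv
        apply rank_eq_two_of_minor (f := ![0, 2])
        have hdet : ((jacC2 lam u v t).submatrix id ![0, 2]).det
            = -9 * u ^ 2 * t ^ 2 := by
          simp [jacC2, Matrix.det_fin_two]
          ring
        rw [hdet]
        exact mul_ne_zero (mul_ne_zero (by norm_num) (pow_ne_zero 2 hu))
          (pow_ne_zero 2 htz)
      · -- v ≠ 0, t ≠ 0 : use columns 1, 2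
        apply rank_eq_two_of_minor (f := ![1, 2])
        have hdet : ((jacC2 lam u v t).submatrix id ![1, 2]).det
            = 9 * v ^ 2 * t ^ 2 := by
          simp [jacC2, Matrix.det_fin_two]
          ring
        rw [hdet]
        exact mul_ne_zero (mul_ne_zero (by norm_num) (pow_ne_zero 2 hvz))
          (pow_ne_zero 2 htz)
  · rintro (rfl | rfl)
    · obtain ⟨v, hv⟩ := IsAlgClosed.exists_pow_nat_eq (k := ℂ) 2 (n := 3) (by norm_num)
      refine ⟨1, v, 0, by rw [hv]; norm_num, by norm_num, ?_⟩
      apply rank_lt_two_of_row_zero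
      intro j
      fin_cases j <;> norm_num [jacC2]
    · refine ⟨-1, 0, 0, by norm_num, by norm_num, ?_⟩
      apply rank_lt_two_of_row_zero
      intro j
      fin_cases j <;> norm_num [jacC2]
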